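/- Rayleigh monotonicity under embedding: let (G, R) and (Ḡ, R̄) be finite connected generalized electrical networks such that G can be embedded in Ḡ via an injection η, and R_e ≥ R̄_{η(e)} (Loewner order) for every edge e of G. Then for every pair of nodes u, v of G, R^eff_{u,v}(G, R) ≥ R̄^eff_{η(u),η(v)}(Ḡ, R̄). -/

import Mathlib

/-- `Reff` is the generalized (matrix-valued) effective resistance between `u` and `v`
in the generalized electrical network `(G, R)` (matrix Kirchhoff and Ohm laws). -/
def IsEffRes {V : Type*} [Fintype V] [DecidableEq V] {k : ℕ} (G : SimpleGraph V)
    (R : V → V → Matrix (Fin k) (Fin k) ℝ) (u v : V)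
    (Reff : Matrix (Fin k) (Fin k) ℝ) : Prop :=
  ∀ J : Matrix (Fin k) (Fin k) ℝ,
    ∃ i : V → V → Matrix (Fin k) (Fin k) ℝ, ∃ p : V → Matrix (Fin k) (Fin k) ℝ,
      (∀ a b, i b a = - i a b) ∧
      (∀ a b, ¬ G.Adj a b → i a b = 0) ∧
      (∀ a, ∑ b, i a b = (if a = u then J else 0) - (if a = v then J else 0)) ∧
      (∀ a b, G.Adj a b → R a b * i a b = p a - p b) ∧
      p u - p v = Reff * J

open Matrix Finset

section Aux

variable {k : ℕ}

private lemma psd_sum' {ι : Type*} (s : Finset ι) (f : ι → Matrix (Fin k) (Fin k) ℝ)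
    (h : ∀ x ∈ s, (f x).PosSemidef) : (∑ x ∈ s, f x).PosSemidef :=
  Finset.sum_induction f Matrix.PosSemidef (fun _ _ ha hb => ha.add hb) Matrix.PosSemidef.zero h

private lemma psd_smul {A : Matrix (Fin k) (Fin k) ℝ} (h : A.PosSemidef) {c : ℝ} (hc : 0 ≤ c) :
    (c • A).PosSemidef := by
  refine ⟨?_, fun x => ?_⟩
  · unfold Matrix.IsHermitian
    rw [Matrix.conjTranspose_smul, h.1]
    simp
  · exact (h.smul hc).2 x

private lemma psd_half {A : Matrix (Fin k) (Fin k) ℝ} (h : (A + A).PosSemidef) :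
    A.PosSemidef := by
  have hA : A = (2⁻¹ : ℝ) • (A + A) := by
    ext i j
    simp [Matrix.add_apply]
    ring
  rw [hA]
  exact psd_smul h (by norm_num)

private lemma energy_identity {V : Type*} [Fintype V] [DecidableEq V]
    (G : SimpleGraph V) (R : V → V → Matrix (Fin k) (Fin k) ℝ)
    (u v : V) (Reff : Matrix (Fin k) (Fin k) ℝ)
    (i : V → V → Matrix (Fin k) (Fin k) ℝ) (p : V → Matrix (Fin k) (Fin k) ℝ)
    (hanti : ∀ a b, i b a = - i a b)
    (hzero : ∀ a b, ¬ G.Adj a b → i a b = 0)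
    (hdiv : ∀ a, ∑ b, i a b =
      (if a = u then (1 : Matrix (Fin k) (Fin k) ℝ) else 0) - (if a = v then 1 else 0))
    (hohm : ∀ a b, G.Adj a b → R a b * i a b = p a - p b)
    (hReff : p u - p v = Reff) :
    ∑ a, ∑ b, (i a b)ᵀ * R a b * i a b = Reff + Reff := by
  have key : ∀ a b, (i a b)ᵀ * R a b * i a b = (i a b)ᵀ * (p a - p b) := by
    intro a b
    by_cases h : G.Adj a b
    · rw [Matrix.mul_assoc, hohm a b h]
    · rw [hzero a b h]; simp
  simp_rw [key, Matrix.mul_sub, Finset.sum_sub_distrib]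
  have h1 : ∑ a, ∑ b, (i a b)ᵀ * p a = Reff := by
    have e : ∀ a : V, ∑ b, (i a b)ᵀ * p a = (∑ b, i a b)ᵀ * p a := by
      intro a
      rw [Matrix.transpose_sum, Finset.sum_mul]
    simp_rw [e, hdiv]
    simp [Matrix.transpose_sub, apply_ite Matrix.transpose, Matrix.sub_mul, ite_mul,
      Finset.sum_sub_distrib, hReff]
  have h2 : ∑ a, ∑ b, (i a b)ᵀ * p b = -Reff := by
    rw [Finset.sum_comm]
    have e : ∀ b : V, ∑ a, (i a b)ᵀ * p b = -((∑ a, i b a)ᵀ * p b) := by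
      intro b
      rw [Matrix.transpose_sum, Finset.sum_mul]
      rw [← Finset.sum_neg_distrib]
      congr 1 with a
      rw [hanti b a]
      simp
    simp_rw [e, hdiv]
    simp [Matrix.transpose_sub, apply_ite Matrix.transpose, Matrix.sub_mul, ite_mul,
      Finset.sum_sub_distrib]
    rw [← hReff]
    abel
  rw [h1, h2, sub_neg_eq_add]

end Aux

section Aux2
variable {k : ℕ}

private lemma thomson {W : Type*} [Fintype W] [DecidableEq W]
    (G' : SimpleGraph W) (R' : W → W → Matrix (Fin k) (Fin k) ℝ)
    (u' v' : W) (Reff' : Matrix (Fin k) (Fin k) ℝ)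
    (i' : W → W → Matrix (Fin k) (Fin k) ℝ) (p' : W → Matrix (Fin k) (Fin k) ℝ)
    (hanti : ∀ a b, i' b a = - i' a b)
    (hzero : ∀ a b, ¬ G'.Adj a b → i' a b = 0)
    (hdiv : ∀ a, ∑ b, i' a b =
      (if a = u' then (1 : Matrix (Fin k) (Fin k) ℝ) else 0) - (if a = v' then 1 else 0))
    (hohm : ∀ a b, G'.Adj a b → R' a b * i' a b = p' a - p' b)
    (hReff : p' u' - p' v' = Reff')
    (hsym : ∀ a b, G'.Adj a b → (R' a b)ᵀ = R' a b)
    (f : W → W → Matrix (Fin k) (Fin k) ℝ)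
    (hfanti : ∀ a b, f b a = - f a b)
    (hfzero : ∀ a b, ¬ G'.Adj a b → f a b = 0)
    (hfdiv : ∀ a, ∑ b, f a b =
      (if a = u' then (1 : Matrix (Fin k) (Fin k) ℝ) else 0) - (if a = v' then 1 else 0)) :
    ∑ a, ∑ b, (f a b)ᵀ * R' a b * f a b
      = (Reff' + Reff')
        + ∑ a, ∑ b, (f a b - i' a b)ᵀ * R' a b * (f a b - i' a b) := by
  set d : W → W → Matrix (Fin k) (Fin k) ℝ := fun a b => f a b - i' a b with hd
  have hdzero : ∀ a b, ¬ G'.Adj a b → d a b = 0 := by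
    intro a b h; simp [hd, hfzero a b h, hzero a b h]
  have hdanti : ∀ a b, d b a = - d a b := by
    intro a b
    simp only [hd]
    rw [hfanti a b, hanti a b]
    abel
  have hddiv : ∀ a, ∑ b, d a b = 0 := by
    intro a
    simp only [hd]
    rw [Finset.sum_sub_distrib, hfdiv a, hdiv a, sub_self]
  -- cross term 1 : ∑∑ dᵀ (R' i') = 0
  have cross1 : ∑ a, ∑ b, (d a b)ᵀ * (R' a b * i' a b) = 0 := by
    have key : ∀ a b, (d a b)ᵀ * (R' a b * i' a b) = (d a b)ᵀ * (p' a - p' b) := by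
      intro a b
      by_cases h : G'.Adj a b
      · rw [hohm a b h]
      · rw [hdzero a b h]; simp
    simp_rw [key, Matrix.mul_sub, Finset.sum_sub_distrib]
    have e1 : ∀ a : W, ∑ b, (d a b)ᵀ * p' a = 0 := by
      intro a
      rw [← Finset.sum_mul, ← Matrix.transpose_sum, hddiv a]
      simp
    have e2 : ∑ a, ∑ b, (d a b)ᵀ * p' b = 0 := by
      rw [Finset.sum_comm]
      have e : ∀ b : W, ∑ a, (d a b)ᵀ * p' b = 0 := by
        intro b
        rw [← Finset.sum_mul, ← Matrix.transpose_sum]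
        have hdab : ∑ a, d a b = 0 := by
          calc ∑ a, d a b = ∑ a, -d b a :=
                Finset.sum_congr rfl (fun a _ => hdanti b a)
            _ = -∑ a, d b a := by rw [Finset.sum_neg_distrib]
            _ = 0 := by rw [hddiv b, neg_zero]
        rw [hdab]
        simp
      simp [e]
    simp [e1, e2]
  have cross2 : ∑ a, ∑ b, (i' a b)ᵀ * R' a b * d a b = 0 := by
    have key : ∀ a b, (i' a b)ᵀ * R' a b * d a b = ((d a b)ᵀ * (R' a b * i' a b))ᵀ := by
      intro a b
      by_cases h : G'.Adj a b
      · rw [Matrix.transpose_mul, Matrix.transpose_mul, Matrix.transpose_transpose,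
          hsym a b h]
      · rw [hzero a b h]; simp
    simp_rw [key, ← Matrix.transpose_sum, cross1, Matrix.transpose_zero]
  have hexp : ∀ a b, (f a b)ᵀ * R' a b * f a b
      = (i' a b)ᵀ * R' a b * i' a b + (i' a b)ᵀ * R' a b * d a b
        + (d a b)ᵀ * (R' a b * i' a b) + (d a b)ᵀ * R' a b * d a b := by
    intro a b
    have hf : f a b = i' a b + d a b := by simp [hd]
    rw [hf]
    simp only [Matrix.transpose_add, Matrix.add_mul, Matrix.mul_add, Matrix.mul_assoc]
    abel
  simp_rw [hexp, Finset.sum_add_distrib]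
  rw [cross1, cross2,
    energy_identity G' R' u' v' Reff' i' p' hanti hzero hdiv hohm hReff]
  simp [hd]

end Aux2

/-- Rayleigh monotonicity under embedding: if G embeds in G' via an
injective adjacency-preserving map η, each edge resistance of G dominates (Loewner
order) the resistance of the corresponding edge of G', and all edge resistances are
symmetric positive definite, then R^eff_{u,v}(G,R) ≥ R'^eff_{η u, η v}(G',R'). -/
theorem effRes_rayleigh_monotonicity {V W : Type*}
    [Fintype V] [DecidableEq V] [Fintype W] [DecidableEq W] {k : ℕ}
    (G : SimpleGraph V) (G' : SimpleGraph W) (hG : G.Connected) (hG' : G'.Connected)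
    (η : V → W) (hinj : Function.Injective η)
    (hadj : ∀ a b : V, G.Adj a b → G'.Adj (η a) (η b))
    (R : V → V → Matrix (Fin k) (Fin k) ℝ) (R' : W → W → Matrix (Fin k) (Fin k) ℝ)
    (hRsym : ∀ a b, R a b = R b a) (hR'sym : ∀ a b, R' a b = R' b a)
    (hRpos : ∀ a b, G.Adj a b → (R a b).PosDef)
    (hR'pos : ∀ a b, G'.Adj a b → (R' a b).PosDef)
    (hle : ∀ a b : V, G.Adj a b → (R a b - R' (η a) (η b)).PosSemidef)
    (u v : V) (Reff Reff' : Matrix (Fin k) (Fin k) ℝ)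
    (h1 : IsEffRes G R u v Reff)
    (h2 : IsEffRes G' R' (η u) (η v) Reff') :
    (Reff - Reff').PosSemidef := by
  classical
  obtain ⟨i, p, hanti, hzero, hdiv, hohm, hReff⟩ := h1 1
  rw [Matrix.mul_one] at hReff
  obtain ⟨i', p', hanti', hzero', hdiv', hohm', hReff'⟩ := h2 1
  rw [Matrix.mul_one] at hReff'
  -- the pushforward flow on G'
  set f : W → W → Matrix (Fin k) (Fin k) ℝ :=
    fun w w' => ∑ a, ∑ b, if w = η a ∧ w' = η b then i a b else 0 with hfdef
  have hfapp : ∀ a b, f (η a) (η b) = i a b := by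
    intro a b
    simp only [hfdef, hinj.eq_iff, ite_and]
    rw [Finset.sum_eq_single a]
    · simp
    · intro a' _ ha'
      simp [Ne.symm ha']
    · intro h; exact absurd (Finset.mem_univ a) h
  have hfanti : ∀ w w', f w' w = - f w w' := by
    intro w w'
    rw [hfdef]
    simp only
    rw [Finset.sum_comm, ← Finset.sum_neg_distrib]
    refine Finset.sum_congr rfl fun a _ => ?_
    rw [← Finset.sum_neg_distrib]
    refine Finset.sum_congr rfl fun b _ => ?_
    by_cases h : w = η a ∧ w' = η b
    · rw [if_pos ⟨h.2, h.1⟩, if_pos h, hanti]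
    · rw [if_neg (fun hc => h ⟨hc.2, hc.1⟩), if_neg h, neg_zero]
  have hfzero : ∀ w w', ¬ G'.Adj w w' → f w w' = 0 := by
    intro w w' h
    simp only [hfdef]
    refine Finset.sum_eq_zero fun a _ => Finset.sum_eq_zero fun b _ => ?_
    by_cases hc : w = η a ∧ w' = η b
    · rw [if_pos hc]
      refine hzero a b fun hab => ?_
      exact h (hc.1 ▸ hc.2 ▸ hadj a b hab)
    · rw [if_neg hc]
  have hfdiv : ∀ w, ∑ w', f w w' =
      (if w = η u then (1 : Matrix (Fin k) (Fin k) ℝ) else 0) - (if w = η v then 1 else 0) := by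
    intro w
    have aux : ∀ z : V, ∑ a, (if w = η a then (if a = z then (1 : Matrix (Fin k) (Fin k) ℝ) else 0) else 0)
        = (if w = η z then 1 else 0) := by
      intro z
      rw [Finset.sum_eq_single z]
      · simp
      · intro a _ haz; rw [if_neg haz, ite_self]
      · intro h; exact absurd (Finset.mem_univ z) h
    calc ∑ w', f w w'
        = ∑ a, ∑ b, ∑ w', (if w = η a ∧ w' = η b then i a b else 0) := by
          rw [hfdef]
          simp only
          rw [Finset.sum_comm]
          refine Finset.sum_congr rfl fun a _ => Finset.sum_comm
      _ = ∑ a, (if w = η a then ∑ b, i a b else 0) := by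
          refine Finset.sum_congr rfl fun a _ => ?_
          simp only [ite_and, Finset.sum_ite_irrel, Finset.sum_const_zero,
            Finset.sum_ite_eq', Finset.mem_univ, if_true]
      _ = ∑ a, ((if w = η a then (if a = u then (1:Matrix (Fin k) (Fin k) ℝ) else 0) else 0)
            - (if w = η a then (if a = v then 1 else 0) else 0)) := by
          refine Finset.sum_congr rfl fun a _ => ?_
          rw [hdiv a]
          split_ifs <;> simp
      _ = _ := by rw [Finset.sum_sub_distrib, aux u, aux v]
  -- symmetry of R' on edges
  have hsym' : ∀ a b, G'.Adj a b → (R' a b)ᵀ = R' a b := by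
    intro a b h
    have := (hR'pos a b h).1
    rwa [Matrix.IsHermitian, Matrix.conjTranspose_eq_transpose_of_trivial] at this
  -- Thomson: energy of f dominates energy of i'
  have hthom := thomson G' R' (η u) (η v) Reff' i' p' hanti' hzero' hdiv' hohm' hReff'
    hsym' f hfanti hfzero hfdiv
  -- energy transfer: energy of f in G' equals pulled-back sum over V
  have htrans : ∑ w, ∑ w', (f w w')ᵀ * R' w w' * f w w'
      = ∑ a, ∑ b, (i a b)ᵀ * R' (η a) (η b) * i a b := by
    have himg : ∀ w w', (w, w') ∉ Finset.univ.image (fun q : V × V => (η q.1, η q.2)) →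
        f w w' = 0 := by
      intro w w' h
      simp only [hfdef]
      refine Finset.sum_eq_zero fun a _ => Finset.sum_eq_zero fun b _ => ?_
      rw [if_neg]
      rintro ⟨rfl, rfl⟩
      exact h (Finset.mem_image.mpr ⟨(a, b), Finset.mem_univ _, rfl⟩)
    calc ∑ w, ∑ w', (f w w')ᵀ * R' w w' * f w w'
        = ∑ q : W × W, (f q.1 q.2)ᵀ * R' q.1 q.2 * f q.1 q.2 := by
          rw [← Finset.univ_product_univ, Finset.sum_product]
      _ = ∑ q ∈ Finset.univ.image (fun q : V × V => (η q.1, η q.2)),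
            (f q.1 q.2)ᵀ * R' q.1 q.2 * f q.1 q.2 := by
          refine (Finset.sum_subset (Finset.subset_univ _) fun q _ hq => ?_).symm
          rw [himg q.1 q.2 (by simpa using hq)]
          simp
      _ = ∑ q : V × V, (f (η q.1) (η q.2))ᵀ * R' (η q.1) (η q.2) * f (η q.1) (η q.2) := by
          refine Finset.sum_image fun q _ q' _ h => ?_
          have h1 := hinj (congrArg Prod.fst h)
          have h2 := hinj (congrArg Prod.snd h)
          exact Prod.ext h1 h2
      _ = ∑ a, ∑ b, (i a b)ᵀ * R' (η a) (η b) * i a b := by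
          rw [← Finset.univ_product_univ, Finset.sum_product]
          exact Finset.sum_congr rfl fun a _ => Finset.sum_congr rfl fun b _ => by
            rw [hfapp]
  -- energy identity for G
  have hE := energy_identity G R u v Reff i p hanti hzero hdiv hohm hReff
  -- assemble
  have hsplit : (Reff - Reff') + (Reff - Reff')
      = ∑ a, ∑ b, (i a b)ᵀ * (R a b - R' (η a) (η b)) * i a b
        + ∑ w, ∑ w', (f w w' - i' w w')ᵀ * R' w w' * (f w w' - i' w w') := by
    have hdiff : ∑ a, ∑ b, (i a b)ᵀ * (R a b - R' (η a) (η b)) * i a b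
        = (∑ a, ∑ b, (i a b)ᵀ * R a b * i a b)
          - ∑ a, ∑ b, (i a b)ᵀ * R' (η a) (η b) * i a b := by
      rw [← Finset.sum_sub_distrib]
      refine Finset.sum_congr rfl fun a _ => ?_
      rw [← Finset.sum_sub_distrib]
      refine Finset.sum_congr rfl fun b _ => ?_
      rw [Matrix.mul_sub, Matrix.sub_mul]
    rw [hdiff, hE, ← htrans, hthom]
    abel
  have hpsd1 : (∑ a, ∑ b, (i a b)ᵀ * (R a b - R' (η a) (η b)) * i a b).PosSemidef := by
    refine psd_sum' _ _ fun a _ => psd_sum' _ _ fun b _ => ?_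
    by_cases h : G.Adj a b
    · have := (hle a b h).conjTranspose_mul_mul_same (i a b)
      rwa [Matrix.conjTranspose_eq_transpose_of_trivial] at this
    · rw [hzero a b h]
      simp only [Matrix.transpose_zero, Matrix.zero_mul, Matrix.mul_zero]
      exact Matrix.PosSemidef.zero
  have hpsd2 : (∑ w, ∑ w', (f w w' - i' w w')ᵀ * R' w w' * (f w w' - i' w w')).PosSemidef := by
    refine psd_sum' _ _ fun w _ => psd_sum' _ _ fun w' _ => ?_
    by_cases h : G'.Adj w w'
    · have := (hR'pos w w' h).posSemidef.conjTranspose_mul_mul_same (f w w' - i' w w')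
      rwa [Matrix.conjTranspose_eq_transpose_of_trivial] at this
    · rw [hfzero w w' h, hzero' w w' h]
      simp only [sub_zero, Matrix.transpose_zero, Matrix.zero_mul, Matrix.mul_zero]
      exact Matrix.PosSemidef.zero
  exact psd_half (hsplit ▸ hpsd1.add hpsd2)
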